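/- arXiv:2508.02164 — 3 statements merged into one kernel-verified Lean document; each statement's English description precedes it below -/
import Mathlib

section
/- Suppose x ∈ ℝ^{np} satisfies Σ_{i=1}^n A_i x_i ⪯ Σ_{i=1}^n d_i componentwise. Then there exist y ∈ ℝ^{nm} and δ ∈ ℝ^{nm} with δ ⪰ 0 such that A x + 𝐋 y + δ − d = 0; i.e., every point feasible for the DRAP extends to a point feasible for the reformulated problem. (The key fact is that any v ∈ ℝ^{nm} whose m-dimensional block-sum Σ_{i=1}^n v_i vanishes lies in the range of 𝐋 = 𝓛 ⊗ I_m.) -/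
set_option autoImplicit false

open scoped BigOperators

noncomputable section

/-- Block-diagonal action `A x` of the stacked matrix `A = blkdiag(A_1,…,A_n)`. -/
def Amul {n m p : ℕ} (A : Fin n → Matrix (Fin m) (Fin p) ℝ)
    (x : EuclideanSpace ℝ (Fin n × Fin p)) : EuclideanSpace ℝ (Fin n × Fin m) :=
  WithLp.toLp 2 (fun q => ∑ k : Fin p, A q.1 q.2 k * x (q.1, k))

/-- Action of `𝐋 = 𝓛 ⊗ I_m` on a stacked vector `u ∈ ℝ^{nm}`. -/
def Lmul {n m : ℕ} (L : Matrix (Fin n) (Fin n) ℝ)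
    (u : EuclideanSpace ℝ (Fin n × Fin m)) : EuclideanSpace ℝ (Fin n × Fin m) :=
  WithLp.toLp 2 (fun q => ∑ l : Fin n, L q.1 l * u (l, q.2))

/-- The sum-of-coordinates linear functional. -/
def sumFun (n : ℕ) : (Fin n → ℝ) →ₗ[ℝ] ℝ where
  toFun v := ∑ i, v i
  map_add' u v := by simp [Finset.sum_add_distrib]
  map_smul' c v := by simp [Finset.mul_sum]

/-- Key fact: any vector with zero coordinate sum is in the range of a symmetric
matrix whose kernel is exactly the constants. -/
lemma exists_mulVec_eq {n : ℕ} (hn : 1 ≤ n) (L : Matrix (Fin n) (Fin n) ℝ)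
    (hLsym : L.IsSymm)
    (hLker : ∀ v : Fin n → ℝ, L.mulVec v = 0 ↔ ∃ c : ℝ, v = fun _ => c)
    (v : Fin n → ℝ) (hv : ∑ i, v i = 0) : ∃ w : Fin n → ℝ, L.mulVec w = v := by
  classical
  have hne : Nonempty (Fin n) := ⟨⟨0, hn⟩⟩
  set T : (Fin n → ℝ) →ₗ[ℝ] (Fin n → ℝ) := L.mulVecLin with hT
  have hone : L.mulVec (fun _ => (1 : ℝ)) = 0 := (hLker _).mpr ⟨1, rfl⟩
  -- kernel of T is the span of the constant-one vector
  have hker : LinearMap.ker T = Submodule.span ℝ {(fun _ => (1:ℝ) : Fin n → ℝ)} := by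
    ext u
    simp only [LinearMap.mem_ker, hT, Matrix.mulVecLin_apply, hLker,
      Submodule.mem_span_singleton]
    constructor
    · rintro ⟨c, rfl⟩; exact ⟨c, by funext i; simp⟩
    · rintro ⟨c, rfl⟩; exact ⟨c, by funext i; simp⟩
  have hone_ne : (fun _ => (1:ℝ) : Fin n → ℝ) ≠ 0 := by
    intro h
    have := congrFun h (Classical.arbitrary (Fin n))
    simp at this
  have hfker : Module.finrank ℝ (LinearMap.ker T) = 1 := by
    rw [hker, finrank_span_singleton hone_ne]
  -- sum functional is surjective
  have hSsurj : Function.Surjective (sumFun n) := by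
    intro r
    refine ⟨fun i => if i = Classical.arbitrary (Fin n) then r else 0, ?_⟩
    simp [sumFun]
  have hfr_pi : Module.finrank ℝ (Fin n → ℝ) = n := by simp
  have hfkerS : Module.finrank ℝ (LinearMap.ker (sumFun n)) = n - 1 := by
    have h1 := LinearMap.finrank_range_add_finrank_ker (sumFun n)
    rw [LinearMap.range_eq_top.mpr hSsurj] at h1
    simp only [finrank_top, hfr_pi] at h1
    have : Module.finrank ℝ ℝ = 1 := Module.finrank_self ℝ
    omega
  have hfrT : Module.finrank ℝ (LinearMap.range T) = n - 1 := by
    have h1 := LinearMap.finrank_range_add_finrank_ker T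
    rw [hfker, hfr_pi] at h1
    omega
  -- range T ≤ ker S
  have hle : LinearMap.range T ≤ LinearMap.ker (sumFun n) := by
    rintro w ⟨u, rfl⟩
    simp only [LinearMap.mem_ker, hT, Matrix.mulVecLin_apply, sumFun,
      LinearMap.coe_mk, AddHom.coe_mk]
    have : ∑ i, L.mulVec u i = ∑ k, (∑ i, L i k) * u k := by
      simp only [Matrix.mulVec, dotProduct]
      rw [Finset.sum_comm]
      simp [Finset.sum_mul]
    rw [this]
    have hcol : ∀ k, (∑ i : Fin n, L i k) = 0 := by
      intro k
      have := congrFun hone k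
      simp only [Matrix.mulVec, dotProduct, mul_one, Pi.zero_apply] at this
      calc (∑ i : Fin n, L i k) = ∑ i : Fin n, L k i := by
            refine Finset.sum_congr rfl fun i _ => ?_
            exact (Matrix.IsSymm.apply hLsym k i)
        _ = 0 := this
    simp [hcol]
  have heq : LinearMap.range T = LinearMap.ker (sumFun n) :=
    Submodule.eq_of_le_of_finrank_eq hle (by rw [hfrT, hfkerS])
  have hvmem : v ∈ LinearMap.ker (sumFun n) := by
    simpa [sumFun] using hv
  rw [← heq] at hvmem
  obtain ⟨w, hw⟩ := hvmem
  exact ⟨w, hw⟩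

/-- every point `x` feasible for the DRAP (`∑ᵢ Aᵢ xᵢ ⪯ ∑ᵢ dᵢ`
componentwise) extends to a point `(x, y, δ)` feasible for the reformulated
problem: there exist `y` and `δ ⪰ 0` such that `A x + 𝐋 y + δ − d = 0`. -/
theorem stmt_1 {n m p : ℕ} (hn : 1 ≤ n) (hpm : m ≤ p)
    (f : Fin n → EuclideanSpace ℝ (Fin p) → ℝ)
    (hdiff : ∀ i, Differentiable ℝ (f i))
    (hconv : ∀ i, ConvexOn ℝ Set.univ (f i))
    (A : Fin n → Matrix (Fin m) (Fin p) ℝ)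
    (hArank : ∀ i, (A i).rank = m)
    (d : EuclideanSpace ℝ (Fin n × Fin m))
    (L : Matrix (Fin n) (Fin n) ℝ)
    (hLsym : L.IsSymm)
    (hLpsd : L.PosSemidef)
    (hLker : ∀ v : Fin n → ℝ, L.mulVec v = 0 ↔ ∃ c : ℝ, v = fun _ => c)
    (x : EuclideanSpace ℝ (Fin n × Fin p))
    (hx : ∀ j : Fin m, (∑ i : Fin n, Amul A x (i, j)) ≤ ∑ i : Fin n, d (i, j)) :
    ∃ (y δ : EuclideanSpace ℝ (Fin n × Fin m)),
      (∀ q, 0 ≤ δ q) ∧ Amul A x + Lmul L y + δ - d = 0 := by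
  classical
  have hn0 : (n : ℝ) ≠ 0 := by positivity
  -- the slack per component j, spread evenly
  set s : Fin m → ℝ := fun j => ∑ i : Fin n, (d (i, j) - Amul A x (i, j)) with hs
  have hs_nonneg : ∀ j, 0 ≤ s j := by
    intro j
    have := hx j
    show 0 ≤ ∑ i : Fin n, (d (i, j) - Amul A x (i, j))
    rw [Finset.sum_sub_distrib]
    linarith
  set δ : EuclideanSpace ℝ (Fin n × Fin m) := WithLp.toLp 2 (fun q => s q.2 / n) with hδ
  set v : Fin m → Fin n → ℝ := fun j i => d (i, j) - Amul A x (i, j) - s j / n with hv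
  have hvsum : ∀ j, ∑ i, v j i = 0 := by
    intro j
    show ∑ i : Fin n, (d (i, j) - Amul A x (i, j) - s j / n) = 0
    rw [Finset.sum_sub_distrib, Finset.sum_const, Finset.card_univ, Fintype.card_fin,
      nsmul_eq_mul]
    have hsj : ∑ i : Fin n, (d (i, j) - Amul A x (i, j)) = s j := rfl
    rw [hsj]
    field_simp
    ring
  have hexists : ∀ j : Fin m, ∃ w : Fin n → ℝ, L.mulVec w = v j :=
    fun j => exists_mulVec_eq hn L hLsym hLker (v j) (hvsum j)
  choose w hw using hexists
  refine ⟨WithLp.toLp 2 (fun q => w q.2 q.1), δ, fun q => div_nonneg (hs_nonneg q.2) (by positivity), ?_⟩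
  ext q
  have hLy : Lmul L (WithLp.toLp 2 (fun q => w q.2 q.1)) q = v q.2 q.1 := by
    have := congrFun (hw q.2) q.1
    simpa [Lmul, Matrix.mulVec, dotProduct] using this
  show Amul A x q + Lmul L (WithLp.toLp 2 (fun q => w q.2 q.1)) q + δ q - d q = 0
  rw [hLy, hv, hδ]
  obtain ⟨i, j⟩ := q
  simp only [PiLp.toLp_apply]
  ring
end
end

section
/- (Theorem 1, part ii) Let γ ∈ (0,1) and ω > 0. Consider sequences x_k ∈ ℝ^{np}, δ_k, y_k ∈ ℝ^{nm} satisfying, for every k ≥ 0, A x_{k+1} = A x_k − γ(A x_k + 𝐋 y_{k+1} + δ_{k+1} − d) + (1−γ)(δ_k − δ_{k+1}), and δ_k ⪰ ω·1 for all k ≥ 1. Suppose at some k₀ ≥ 1 the coupled constraint is violated, and let C ∈ ℝ^m be any componentwise upper bound with Σ_{i=1}^n (A_i x_{i,k₀} + δ_{i,k₀} − d_i) ⪯ C. Then for every integer t ≥ 0 with (1−γ)^t · C ⪯ (nω/(1−γ))·1_m (in particular for every t ≥ ln(nω/‖C‖_∞)/ln(1−γ) when ‖C‖_∞ > nω), the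 violation is eliminated and stays eliminated: Σ_{i=1}^n A_i x_{i,k₀+t+s} ⪯ Σ_{i=1}^n d_i componentwise for all s ≥ 1. Hence the constraint violation decreases to zero in a finite, explicitly bounded number of iterations. -/
set_option autoImplicit false

open scoped BigOperators

noncomputable section

/-- Theorem 1, part ii: for `γ ∈ (0,1)`, `ω > 0`, sequences
satisfying the DanyRA decision-update constraint and `δ_k ⪰ ω·1` for `k ≥ 1`,
if `C ∈ ℝ^m` bounds the aggregate `∑ᵢ (Aᵢ x_{i,k₀} + δ_{i,k₀} − dᵢ) ⪯ C` at
some `k₀ ≥ 1`, then for every `t` with `(1−γ)^t·C ⪯ (nω/(1−γ))·1` the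
violation is eliminated and stays eliminated:
`∑ᵢ Aᵢ x_{i,k₀+t+s} ⪯ ∑ᵢ dᵢ` componentwise for all `s ≥ 1`. -/
theorem stmt_8 {n m p : ℕ} (hn : 1 ≤ n)
    (A : Fin n → Matrix (Fin m) (Fin p) ℝ)
    (d : EuclideanSpace ℝ (Fin n × Fin m))
    (L : Matrix (Fin n) (Fin n) ℝ)
    (hLsym : L.IsSymm)
    (hLrow : ∀ i, ∑ j, L i j = 0)
    (hLcol : ∀ j, ∑ i, L i j = 0)
    (γ ω : ℝ) (hγ0 : 0 < γ) (hγ1 : γ < 1) (hω : 0 < ω)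
    (x : ℕ → EuclideanSpace ℝ (Fin n × Fin p))
    (y δ : ℕ → EuclideanSpace ℝ (Fin n × Fin m))
    (hrec : ∀ k : ℕ, Amul A (x (k + 1)) =
      Amul A (x k) - γ • (Amul A (x k) + Lmul L (y (k + 1)) + δ (k + 1) - d)
        + (1 - γ) • (δ k - δ (k + 1)))
    (hδω : ∀ k : ℕ, 1 ≤ k → ∀ q, ω ≤ δ k q)
    (k₀ : ℕ) (hk₀ : 1 ≤ k₀)
    (C : Fin m → ℝ)
    (hC : ∀ j : Fin m,
      (∑ i : Fin n, (Amul A (x k₀) (i, j) + δ k₀ (i, j) - d (i, j))) ≤ C j) :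
    ∀ t : ℕ, (∀ j : Fin m, (1 - γ) ^ t * C j ≤ n * ω / (1 - γ)) →
      ∀ s : ℕ, 1 ≤ s → ∀ j : Fin m,
        (∑ i : Fin n, Amul A (x (k₀ + t + s)) (i, j)) ≤ ∑ i : Fin n, d (i, j) := by
  have hγ1' : (0:ℝ) < 1 - γ := by linarith
  set S : ℕ → Fin m → ℝ :=
    fun k j => ∑ i : Fin n, (Amul A (x k) (i, j) + δ k (i, j) - d (i, j)) with hS
  have hstep : ∀ k j, S (k + 1) j = (1 - γ) * S k j := by
    intro k j
    have hL : ∑ i : Fin n, Lmul L (y (k + 1)) (i, j) = 0 := by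
      simp only [Lmul, PiLp.toLp_apply]
      rw [Finset.sum_comm]
      simp [← Finset.sum_mul, hLcol]
    have hpt : ∀ i : Fin n,
        Amul A (x (k + 1)) (i, j) + δ (k + 1) (i, j) - d (i, j)
          = (1 - γ) * (Amul A (x k) (i, j) + δ k (i, j) - d (i, j))
            - γ * Lmul L (y (k + 1)) (i, j) := by
      intro i
      have h := congrArg (fun v => v (i, j)) (hrec k)
      simp only [PiLp.sub_apply, PiLp.add_apply, PiLp.smul_apply, smul_eq_mul] at h
      rw [h]; ring
    simp only [hS]
    rw [Finset.sum_congr rfl (fun i _ => hpt i), Finset.sum_sub_distrib,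
      ← Finset.mul_sum, ← Finset.mul_sum, hL]
    ring
  have hgeom : ∀ r j, S (k₀ + r) j ≤ (1 - γ) ^ r * C j := by
    intro r
    induction r with
    | zero => intro j; simpa only [hS, add_zero, pow_zero, one_mul] using hC j
    | succ r ih =>
      intro j
      have : S (k₀ + (r + 1)) j = (1 - γ) * S (k₀ + r) j := by
        rw [show k₀ + (r + 1) = k₀ + r + 1 by omega, hstep (k₀ + r) j]
      rw [this, pow_succ]
      calc (1 - γ) * S (k₀ + r) j ≤ (1 - γ) * ((1 - γ) ^ r * C j) :=
            mul_le_mul_of_nonneg_left (ih j) (le_of_lt hγ1')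
        _ = (1 - γ) ^ r * (1 - γ) * C j := by ring
  intro t ht s hs j
  have hSle : S (k₀ + t + s) j ≤ (1 - γ) ^ (t + s) * C j := by
    have := hgeom (t + s) j
    rwa [← add_assoc] at this
  have hbound : (1 - γ) ^ (t + s) * C j ≤ n * ω := by
    have h1 : (1 - γ) ^ (t + s) * C j = (1 - γ) ^ s * ((1 - γ) ^ t * C j) := by ring
    have h2 : (1 - γ) ^ s * ((1 - γ) ^ t * C j) ≤ (1 - γ) ^ s * (n * ω / (1 - γ)) :=
      mul_le_mul_of_nonneg_left (ht j) (pow_nonneg (le_of_lt hγ1') s)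
    have h3 : (1 - γ) ^ s ≤ (1 - γ) ^ 1 :=
      pow_le_pow_of_le_one (le_of_lt hγ1') (by linarith) hs
    have hnω : (0:ℝ) ≤ n * ω / (1 - γ) := by
      have : (0:ℝ) ≤ (n:ℝ) * ω := mul_nonneg (Nat.cast_nonneg n) (le_of_lt hω)
      positivity
    have h4 : (1 - γ) ^ s * (n * ω / (1 - γ)) ≤ (1 - γ) * (n * ω / (1 - γ)) := by
      have := mul_le_mul_of_nonneg_right (by simpa using h3) hnω
      simpa using this
    have h5 : (1 - γ) * ((n:ℝ) * ω / (1 - γ)) = n * ω := by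
      field_simp
    linarith [h1 ▸ (le_trans h2 (le_trans h4 (le_of_eq h5)))]
  have hδsum : (n:ℝ) * ω ≤ ∑ i : Fin n, δ (k₀ + t + s) (i, j) := by
    have hk : 1 ≤ k₀ + t + s := le_trans hk₀ (by omega)
    calc (n:ℝ) * ω = ∑ _i : Fin n, ω := by
          simp [Finset.sum_const, mul_comm]
      _ ≤ ∑ i : Fin n, δ (k₀ + t + s) (i, j) :=
          Finset.sum_le_sum (fun i _ => hδω _ hk (i, j))
  have heq : S (k₀ + t + s) j
      = (∑ i : Fin n, Amul A (x (k₀ + t + s)) (i, j))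
        + (∑ i : Fin n, δ (k₀ + t + s) (i, j)) - ∑ i : Fin n, d (i, j) := by
    simp only [hS]
    rw [Finset.sum_sub_distrib, Finset.sum_add_distrib]
  linarith
end
end

section
/- (Theorem 2, part iii) Let γ ∈ (0,1) and let ω_k > 0 be buffers satisfying ω_{k+1} ≥ (1−γ)ω_k for all k. Consider sequences x_k ∈ ℝ^{np}, δ_k, y_k ∈ ℝ^{nm} satisfying, for every k ≥ 0, A x_{k+1} = A x_k − γ(A x_k + 𝐋 y_{k+1} + δ_{k+1} − d) + (1−γ)(δ_k − δ_{k+1}), and δ_{k+1} ⪰ ω_k·1 for all k ≥ 0. If at some k₀ ≥ 1 one has Σ_{i=1}^n (A_i x_{i,k₀} + δ_{i,k₀} − d_i) ⪯ (n ω_{k₀}/(1−γ))·1_m componentwise, then the global coupled constraint remains satisfied thereafter: Σ_{i=1}^n A_i x_{i,k₀+t} ⪯ Σ_{i=1}^n d_i componentwise for all t ≥ 1. -/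
set_option autoImplicit false

open scoped BigOperators

noncomputable section

/-- Theorem 2, part iii: for `γ ∈ (0,1)` and buffers `ω_k > 0`
with `ω_{k+1} ≥ (1−γ)ω_k`, sequences satisfying the DanyRA decision-update
constraint and `δ_{k+1} ⪰ ω_k·1`, if at some `k₀ ≥ 1`
`∑ᵢ (Aᵢ x_{i,k₀} + δ_{i,k₀} − dᵢ) ⪯ (n ω_{k₀}/(1−γ))·1`, then the global
coupled constraint remains satisfied thereafter:
`∑ᵢ Aᵢ x_{i,k₀+t} ⪯ ∑ᵢ dᵢ` componentwise for all `t ≥ 1`. -/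
theorem stmt_14 {n m p : ℕ} (hn : 1 ≤ n)
    (A : Fin n → Matrix (Fin m) (Fin p) ℝ)
    (d : EuclideanSpace ℝ (Fin n × Fin m))
    (L : Matrix (Fin n) (Fin n) ℝ)
    (hLsym : L.IsSymm)
    (hLrow : ∀ i, ∑ j, L i j = 0)
    (hLcol : ∀ j, ∑ i, L i j = 0)
    (γ : ℝ) (hγ0 : 0 < γ) (hγ1 : γ < 1)
    (ω : ℕ → ℝ) (hω : ∀ k, 0 < ω k)
    (hωdec : ∀ k, (1 - γ) * ω k ≤ ω (k + 1))
    (x : ℕ → EuclideanSpace ℝ (Fin n × Fin p))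
    (y δ : ℕ → EuclideanSpace ℝ (Fin n × Fin m))
    (hrec : ∀ k : ℕ, Amul A (x (k + 1)) =
      Amul A (x k) - γ • (Amul A (x k) + Lmul L (y (k + 1)) + δ (k + 1) - d)
        + (1 - γ) • (δ k - δ (k + 1)))
    (hδω : ∀ k : ℕ, ∀ q, ω k ≤ δ (k + 1) q)
    (k₀ : ℕ) (hk₀ : 1 ≤ k₀)
    (hsmall : ∀ j : Fin m,
      (∑ i : Fin n, (Amul A (x k₀) (i, j) + δ k₀ (i, j) - d (i, j)))
        ≤ n * ω k₀ / (1 - γ)) :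
    ∀ t : ℕ, 1 ≤ t → ∀ j : Fin m,
      (∑ i : Fin n, Amul A (x (k₀ + t)) (i, j)) ≤ ∑ i : Fin n, d (i, j) := by
  have h1γ : 0 < 1 - γ := by linarith
  -- the Laplacian term sums to zero blockwise
  have hLzero : ∀ (u : EuclideanSpace ℝ (Fin n × Fin m)) (j : Fin m),
      ∑ i : Fin n, Lmul L u (i, j) = 0 := by
    intro u j
    simp only [Lmul, PiLp.toLp_apply]
    rw [Finset.sum_comm]
    simp [← Finset.sum_mul, hLcol]
  -- abbreviate the slack
  set S : ℕ → Fin m → ℝ :=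
    fun k j => ∑ i : Fin n, (Amul A (x k) (i, j) + δ k (i, j) - d (i, j)) with hSdef
  -- slack contraction
  have hrecS : ∀ k j, S (k + 1) j = (1 - γ) * S k j := by
    intro k j
    have hpt : ∀ i : Fin n, Amul A (x (k + 1)) (i, j) =
        Amul A (x k) (i, j)
          - γ * (Amul A (x k) (i, j) + Lmul L (y (k + 1)) (i, j)
              + δ (k + 1) (i, j) - d (i, j))
          + (1 - γ) * (δ k (i, j) - δ (k + 1) (i, j)) := by
      intro i
      have h := congrArg (fun v => v (i, j)) (hrec k)
      simpa [PiLp.add_apply, PiLp.sub_apply, PiLp.smul_apply, smul_eq_mul] using h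
    have hL := hLzero (y (k + 1)) j
    simp only [hSdef]
    rw [Finset.sum_congr rfl (fun i _ => by rw [hpt i])]
    simp only [Finset.sum_add_distrib, Finset.sum_sub_distrib, ← Finset.mul_sum]
    rw [hL]
    ring
  have hSpow : ∀ t j, S (k₀ + t) j = (1 - γ) ^ t * S k₀ j := by
    intro t j
    induction t with
    | zero => simp
    | succ s ih =>
      have := hrecS (k₀ + s) j
      rw [show k₀ + (s + 1) = (k₀ + s) + 1 from rfl, this, ih, pow_succ]
      ring
  have hωpow : ∀ t, (1 - γ) ^ t * ω k₀ ≤ ω (k₀ + t) := by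
    intro t
    induction t with
    | zero => simp
    | succ s ih =>
      calc (1 - γ) ^ (s + 1) * ω k₀ = (1 - γ) * ((1 - γ) ^ s * ω k₀) := by ring
        _ ≤ (1 - γ) * ω (k₀ + s) := by
            exact mul_le_mul_of_nonneg_left ih (le_of_lt h1γ)
        _ ≤ ω (k₀ + s + 1) := hωdec (k₀ + s)
  intro t ht j
  obtain ⟨s, rfl⟩ : ∃ s, t = s + 1 := ⟨t - 1, by omega⟩
  -- ∑ A x = S - ∑ δ + ∑ d
  have hδbound : (n : ℝ) * ω (k₀ + s) ≤ ∑ i : Fin n, δ (k₀ + s + 1) (i, j) := by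
    calc (n : ℝ) * ω (k₀ + s) = ∑ _i : Fin n, ω (k₀ + s) := by
          simp [Finset.sum_const, mul_comm]
      _ ≤ ∑ i : Fin n, δ (k₀ + s + 1) (i, j) :=
          Finset.sum_le_sum fun i _ => hδω (k₀ + s) (i, j)
  have hSle : S (k₀ + (s + 1)) j ≤ (n : ℝ) * ω (k₀ + s) := by
    rw [hSpow (s + 1) j]
    calc (1 - γ) ^ (s + 1) * S k₀ j
        ≤ (1 - γ) ^ (s + 1) * ((n : ℝ) * ω k₀ / (1 - γ)) := by
          exact mul_le_mul_of_nonneg_left (hsmall j) (pow_nonneg (le_of_lt h1γ) _)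
      _ = (n : ℝ) * ((1 - γ) ^ s * ω k₀) := by
          rw [pow_succ]; field_simp
      _ ≤ (n : ℝ) * ω (k₀ + s) := by
          exact mul_le_mul_of_nonneg_left (hωpow s) (by positivity)
  have hexpand : S (k₀ + (s + 1)) j
      = (∑ i : Fin n, Amul A (x (k₀ + (s + 1))) (i, j))
        + (∑ i : Fin n, δ (k₀ + (s + 1)) (i, j)) - ∑ i : Fin n, d (i, j) := by
    simp [hSdef, Finset.sum_add_distrib, Finset.sum_sub_distrib]
  have : (∑ i : Fin n, Amul A (x (k₀ + (s + 1))) (i, j))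
      + (∑ i : Fin n, δ (k₀ + (s + 1)) (i, j)) - ∑ i : Fin n, d (i, j)
      ≤ (n : ℝ) * ω (k₀ + s) := hexpand ▸ hSle
  have hδ' : (n : ℝ) * ω (k₀ + s) ≤ ∑ i : Fin n, δ (k₀ + (s + 1)) (i, j) := by
    simpa [Nat.add_assoc] using hδbound
  linarith
end
end
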